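/- Let S be a finite semigroup with a rank labelling ρ : S → ℕ, and let k be the maximum value attained by ρ on S. Suppose α, β ∈ S satisfy ρ(α) = ρ(β) = k and ρ(α·β) = r with r < k. Let X = {s ∈ S : ρ(s) ≥ r + 1} and R = {(x_s·x_t, x_{st}) : ρ(s) ≥ r+1, ρ(t) ≥ r+1, ρ(s·t) ≥ r+1} ⊆ FreeSemigroup X × FreeSemigroup X. Then every word w ∈ FreeSemigroup X that is related to x_α·x_β by the congruence generated by R has the form w = x_{α₁}⋯x_{α_p}·x_{β₁}⋯x_{β_q} for some p, q ≥ 1 and elements α₁,…,α_p, β₁,…,β_q ∈ S with ρ(αᵢ) = k and ρ(βⱼ) = k for all i, j, with α₁⋯α_p = α, β₁⋯β_q = β, and ρ(α_p·β₁) = r. -/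

import Mathlib

/-- The principal two-sided ideal generated by `y`. -/
def Jset {S : Type*} [Semigroup S] (y : S) : Set S :=
  {y} ∪ {z | ∃ s, z = s * y} ∪ {z | ∃ s, z = y * s} ∪ {z | ∃ s t, z = s * y * t}

/-- `ρ` is a rank labelling of `S`: it reflects the inclusion order of principal ideals;
in particular the `J`-classes of `S` form a chain. -/
def IsRankLabelling {S : Type*} [Semigroup S] (ρ : S → ℕ) : Prop :=
  ∀ x y : S, ρ x ≤ ρ y ↔ Jset x ⊆ Jset y

section JsetLemmas

variable {S : Type*} [Semigroup S]

theorem mem_Jset_self (x : S) : x ∈ Jset x := Or.inl (Or.inl (Or.inl rfl))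

theorem mul_left_mem_Jset (s x : S) : s * x ∈ Jset x := Or.inl (Or.inl (Or.inr ⟨s, rfl⟩))

theorem mul_right_mem_Jset (x s : S) : x * s ∈ Jset x := Or.inl (Or.inr ⟨s, rfl⟩)

theorem mul_mul_mem_Jset (s x t : S) : s * x * t ∈ Jset x := Or.inr ⟨s, t, rfl⟩

theorem Jset_mul_left {x z : S} (h : z ∈ Jset x) (s : S) : s * z ∈ Jset x := by
  rcases h with ((h | ⟨a, rfl⟩) | ⟨a, rfl⟩) | ⟨a, b, rfl⟩
  · cases h; exact mul_left_mem_Jset s x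
  · exact Or.inl (Or.inl (Or.inr ⟨s * a, by simp [mul_assoc]⟩))
  · exact Or.inr ⟨s, a, by simp [mul_assoc]⟩
  · exact Or.inr ⟨s * a, b, by simp [mul_assoc]⟩

theorem Jset_mul_right {x z : S} (h : z ∈ Jset x) (s : S) : z * s ∈ Jset x := by
  rcases h with ((h | ⟨a, rfl⟩) | ⟨a, rfl⟩) | ⟨a, b, rfl⟩
  · cases h; exact mul_right_mem_Jset x s
  · exact Or.inr ⟨a, s, by simp [mul_assoc]⟩
  · exact Or.inl (Or.inr ⟨a * s, by simp [mul_assoc]⟩)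
  · exact Or.inr ⟨a, b * s, by simp [mul_assoc]⟩

theorem Jset_subset_of_mem {x z : S} (h : z ∈ Jset x) : Jset z ⊆ Jset x := by
  rintro w (((hw | ⟨a, rfl⟩) | ⟨a, rfl⟩) | ⟨a, b, rfl⟩)
  · cases hw; exact h
  · exact Jset_mul_left h a
  · exact Jset_mul_right h a
  · exact Jset_mul_right (Jset_mul_left h a) b

variable {ρ : S → ℕ}

theorem rank_le_of_mem (hρ : IsRankLabelling ρ) {x z : S} (h : z ∈ Jset x) : ρ z ≤ ρ x :=
  (hρ z x).2 (Jset_subset_of_mem h)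

theorem rank_mul_le_left (hρ : IsRankLabelling ρ) (x y : S) : ρ (x * y) ≤ ρ x :=
  rank_le_of_mem hρ (mul_right_mem_Jset x y)

theorem rank_mul_le_right (hρ : IsRankLabelling ρ) (x y : S) : ρ (x * y) ≤ ρ y :=
  rank_le_of_mem hρ (mul_left_mem_Jset x y)

theorem Jset_eq_of_rank_eq (hρ : IsRankLabelling ρ) {x y : S} (h : ρ x = ρ y) :
    Jset x = Jset y :=
  le_antisymm ((hρ x y).1 h.le) ((hρ y x).1 h.ge)

end JsetLemmas

theorem exists_idem_pow {M : Type*} [Monoid M] [Finite M] (a : M) :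
    ∃ n, 0 < n ∧ a ^ n * a ^ n = a ^ n := by
  obtain ⟨i, j, hne, hij⟩ := Finite.exists_ne_map_eq_of_infinite (fun n : ℕ => a ^ n)
  wlog hlt : i < j generalizing i j
  · exact this j i hne.symm hij.symm (by omega)
  set d := j - i with hd
  have hd0 : 0 < d := by omega
  have step : ∀ c, i ≤ c → a ^ c = a ^ (c + d) := by
    intro c hc
    have h1 : a ^ c = a ^ i * a ^ (c - i) := by rw [← pow_add]; congr 1; omega
    rw [h1, hij, ← pow_add]
    congr 1; omega
  have iter : ∀ t c, i ≤ c → a ^ c = a ^ (c + t * d) := by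
    intro t
    induction t with
    | zero => simp
    | succ t ih =>
      intro c hc
      rw [ih c hc, step (c + t * d) (by omega)]
      congr 1; ring
  have hile : i + 1 ≤ d * (i + 1) := Nat.le_mul_of_pos_left _ hd0
  refine ⟨d * (i + 1), by positivity, ?_⟩
  rw [← pow_add]
  have h2 := iter (i + 1) (d * (i + 1)) (by omega)
  have h3 : d * (i + 1) + (i + 1) * d = d * (i + 1) + d * (i + 1) := by ring
  rw [h3] at h2
  exact h2.symm

theorem eat_right {M : Type*} [Monoid M] [Finite M] {x c w : M} (h : x = c * x * w) :
    ∃ z, x = z * (c * x) := by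
  have iter : ∀ n, x = c ^ n * x * w ^ n := by
    intro n
    induction n with
    | zero => simp
    | succ n ih =>
      rw [pow_succ', pow_succ]
      calc x = c * x * w := h
        _ = c * (c ^ n * x * w ^ n) * w := by rw [← ih]
        _ = c * c ^ n * x * (w ^ n * w) := by simp [mul_assoc]
  obtain ⟨n, hn, hidem⟩ := exists_idem_pow w
  have h1 : x * w ^ n = x := by
    conv_lhs => rw [iter n]
    rw [mul_assoc (c ^ n * x), hidem, ← iter n]
  have h2 : x = c ^ n * x := by
    calc x = c ^ n * x * w ^ n := iter n
      _ = c ^ n * (x * w ^ n) := mul_assoc _ _ _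
      _ = c ^ n * x := by rw [h1]
  refine ⟨c ^ (n - 1), ?_⟩
  have hc : c ^ n = c ^ (n - 1) * c := by
    rw [← pow_succ]; congr 1; omega
  conv_lhs => rw [h2, hc, mul_assoc]

theorem eat_left {M : Type*} [Monoid M] [Finite M] {x c w : M} (h : x = w * x * c) :
    ∃ z, x = x * c * z := by
  have iter : ∀ n, x = w ^ n * x * c ^ n := by
    intro n
    induction n with
    | zero => simp
    | succ n ih =>
      rw [pow_succ', pow_succ]
      calc x = w * x * c := h
        _ = w * (w ^ n * x * c ^ n) * c := by rw [← ih]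
        _ = w * w ^ n * x * (c ^ n * c) := by simp [mul_assoc]
  obtain ⟨n, hn, hidem⟩ := exists_idem_pow w
  have h1 : w ^ n * x = x := by
    conv_lhs => rw [iter n]
    calc w ^ n * (w ^ n * x * c ^ n) = w ^ n * w ^ n * x * c ^ n := by simp [mul_assoc]
      _ = w ^ n * x * c ^ n := by rw [hidem]
      _ = x := (iter n).symm
  have h2 : x = x * c ^ n := by
    calc x = w ^ n * x * c ^ n := iter n
      _ = x * c ^ n := by rw [h1]
  refine ⟨c ^ (n - 1), ?_⟩
  have hc : c ^ n = c * c ^ (n - 1) := by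
    rw [← pow_succ']; congr 1; omega
  conv_lhs => rw [h2, hc, ← mul_assoc]
section Stab

variable {S : Type*} [Semigroup S] {ρ : S → ℕ}

theorem rank_le_of_coe_eq_mul_left (hρ : IsRankLabelling ρ) {x y : S} {z : WithOne S}
    (h : (↑x : WithOne S) = z * ↑y) : ρ x ≤ ρ y := by
  by_cases hz : z = 1
  · rw [hz, one_mul, WithOne.coe_inj] at h
    exact h ▸ le_refl _
  · obtain ⟨a, rfl⟩ := WithOne.ne_one_iff_exists.mp hz
    rw [← WithOne.coe_mul, WithOne.coe_inj] at h
    exact h ▸ rank_le_of_mem hρ (mul_left_mem_Jset a y)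

theorem rank_le_of_coe_eq_mul_right (hρ : IsRankLabelling ρ) {x y : S} {z : WithOne S}
    (h : (↑x : WithOne S) = ↑y * z) : ρ x ≤ ρ y := by
  by_cases hz : z = 1
  · rw [hz, mul_one, WithOne.coe_inj] at h
    exact h ▸ le_refl _
  · obtain ⟨a, rfl⟩ := WithOne.ne_one_iff_exists.mp hz
    rw [← WithOne.coe_mul, WithOne.coe_inj] at h
    exact h ▸ rank_le_of_mem hρ (mul_right_mem_Jset y a)

variable [Finite S]

theorem stab_left (hρ : IsRankLabelling ρ) {p s : S} (h : ρ (p * s) = ρ s) :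
    ∃ z : WithOne S, (↑s : WithOne S) = z * ↑(p * s) := by
  letI : Fintype S := Fintype.ofFinite S
  letI : Finite (WithOne S) := inferInstanceAs (Finite (Option S))
  have hs : s ∈ Jset (p * s) := by
    rw [Jset_eq_of_rank_eq hρ h]; exact mem_Jset_self s
  rcases hs with ((h1 | ⟨a, ha⟩) | ⟨a, ha⟩) | ⟨a, b, hab⟩
  · exact ⟨1, by rw [one_mul, WithOne.coe_inj]; exact h1⟩
  · exact ⟨↑a, by rw [← WithOne.coe_mul, WithOne.coe_inj]; exact ha⟩
  · have hx : (↑s : WithOne S) = ↑p * ↑s * ↑a := by exact_mod_cast ha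
    obtain ⟨z, hz⟩ := eat_right hx
    exact ⟨z, hz.trans (by simp [WithOne.coe_mul])⟩
  · have hab' : s = a * p * s * b := hab.trans (by simp [mul_assoc])
    have hx : (↑s : WithOne S) = ↑a * ↑p * ↑s * ↑b := by exact_mod_cast hab'
    obtain ⟨z, hz⟩ := eat_right hx
    refine ⟨z * ↑a, ?_⟩
    exact hz.trans (by simp [WithOne.coe_mul, mul_assoc])

theorem stab_right (hρ : IsRankLabelling ρ) {p s : S} (h : ρ (s * p) = ρ s) :
    ∃ z : WithOne S, (↑s : WithOne S) = ↑(s * p) * z := by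
  letI : Fintype S := Fintype.ofFinite S
  letI : Finite (WithOne S) := inferInstanceAs (Finite (Option S))
  have hs : s ∈ Jset (s * p) := by
    rw [Jset_eq_of_rank_eq hρ h]; exact mem_Jset_self s
  rcases hs with ((h1 | ⟨a, ha⟩) | ⟨a, ha⟩) | ⟨a, b, hab⟩
  · exact ⟨1, by rw [mul_one, WithOne.coe_inj]; exact h1⟩
  · -- s = a * (s * p) : eat_left with w := a, c := p
    have ha' : s = a * s * p := ha.trans (by simp [mul_assoc])
    have hx : (↑s : WithOne S) = ↑a * ↑s * ↑p := by exact_mod_cast ha'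
    obtain ⟨z, hz⟩ := eat_left hx
    exact ⟨z, hz.trans (by simp [WithOne.coe_mul])⟩
  · exact ⟨↑a, by rw [← WithOne.coe_mul, WithOne.coe_inj]; exact ha⟩
  · -- s = a * (s * p) * b : eat_left with w := a, c := p * b
    have hab' : s = a * s * (p * b) := hab.trans (by simp [mul_assoc])
    have hx : (↑s : WithOne S) = ↑a * ↑s * (↑p * ↑b) := by exact_mod_cast hab'
    obtain ⟨z, hz⟩ := eat_left hx
    refine ⟨↑b * z, ?_⟩
    exact hz.trans (by simp [WithOne.coe_mul, mul_assoc])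

theorem rank_mul_right_congr (hρ : IsRankLabelling ρ) {p s : S} (h : ρ (p * s) = ρ s) (b : S) :
    ρ (p * s * b) = ρ (s * b) := by
  obtain ⟨z, hz⟩ := stab_left hρ h
  apply le_antisymm
  · refine rank_le_of_mem hρ ?_
    rw [mul_assoc]
    exact mul_left_mem_Jset p (s * b)
  · refine rank_le_of_coe_eq_mul_left hρ (z := z) ?_
    calc (↑(s * b) : WithOne S) = ↑s * ↑b := WithOne.coe_mul s b
      _ = z * ↑(p * s) * ↑b := by rw [hz]
      _ = z * ↑(p * s * b) := by rw [mul_assoc, ← WithOne.coe_mul]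

theorem rank_mul_left_congr (hρ : IsRankLabelling ρ) {p s : S} (h : ρ (s * p) = ρ s) (b : S) :
    ρ (b * (s * p)) = ρ (b * s) := by
  obtain ⟨z, hz⟩ := stab_right hρ h
  apply le_antisymm
  · refine rank_le_of_mem hρ ?_
    rw [← mul_assoc]
    exact mul_right_mem_Jset (b * s) p
  · refine rank_le_of_coe_eq_mul_right hρ (z := z) ?_
    calc (↑(b * s) : WithOne S) = ↑b * ↑s := WithOne.coe_mul b s
      _ = ↑b * (↑(s * p) * z) := by rw [hz]
      _ = ↑(b * (s * p)) * z := by rw [← mul_assoc, ← WithOne.coe_mul]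

end Stab

section PrS

variable {S : Type*} [Semigroup S]

/-- Product of a list in a semigroup, with default value `d` for the empty list. -/
def prS (d : S) : List S → S
  | [] => d
  | a :: l => l.foldl (· * ·) a

theorem foldl_mul_assoc (l : List S) (a b : S) :
    l.foldl (· * ·) (a * b) = a * l.foldl (· * ·) b := by
  induction l generalizing b with
  | nil => rfl
  | cons x l ih =>
    simp only [List.foldl_cons]
    rw [mul_assoc, ih]

theorem prS_cons (d a : S) {l : List S} (h : l ≠ []) :
    prS d (a :: l) = a * prS d l := by
  cases l with
  | nil => exact absurd rfl h
  | cons b m =>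
    show (b :: m).foldl (· * ·) a = a * m.foldl (· * ·) b
    rw [List.foldl_cons]
    exact foldl_mul_assoc m a b

theorem prS_append (d : S) {l₁ l₂ : List S} (h₁ : l₁ ≠ []) (h₂ : l₂ ≠ []) :
    prS d (l₁ ++ l₂) = prS d l₁ * prS d l₂ := by
  induction l₁ with
  | nil => exact absurd rfl h₁
  | cons a l ih =>
    cases l with
    | nil =>
      show prS d (a :: l₂) = prS d [a] * prS d l₂
      rw [prS_cons d a h₂]
      rfl
    | cons b m =>
      rw [List.cons_append, prS_cons d a (by simp), ih (by simp),
        prS_cons d a (by simp), mul_assoc]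

theorem prS_merge (d : S) (p q : List S) (s t : S) :
    prS d (p ++ s :: t :: q) = prS d (p ++ (s * t) :: q) := by
  have base : prS d (s :: t :: q) = prS d ((s * t) :: q) := rfl
  cases p with
  | nil => exact base
  | cons a l =>
    rw [prS_append d (by simp) (by simp), prS_append d (by simp) (by simp), base]

theorem prod_mem_Jset (d : S) {l : List S} {x : S} (h : x ∈ l) :
    prS d l ∈ Jset x := by
  obtain ⟨l₁, l₂, rfl⟩ := List.append_of_mem h
  cases l₁ with
  | nil =>
    cases l₂ with
    | nil => exact mem_Jset_self x
    | cons c m =>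
      rw [List.nil_append, prS_cons d x (by simp)]
      exact mul_right_mem_Jset x _
  | cons a l =>
    cases l₂ with
    | nil =>
      rw [prS_append d (by simp) (by simp)]
      exact mul_left_mem_Jset _ x
    | cons c m =>
      rw [prS_append d (by simp) (by simp), prS_cons d x (by simp), ← mul_assoc]
      exact mul_mul_mem_Jset _ x _

end PrS
section Boundary

variable {S : Type*} [Semigroup S] [Finite S] {ρ : S → ℕ}

theorem boundary_rank (hρ : IsRankLabelling ρ) {k : ℕ} {α β : S}
    (hα : ρ α = k) (hβ : ρ β = k) {U V : List S} (hU : U ≠ []) (hV : V ≠ [])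
    (hUk : ∀ x ∈ U, ρ x = k) (hVk : ∀ x ∈ V, ρ x = k)
    (hUp : prS α U = α) (hVp : prS α V = β) :
    ρ (U.getLast hU * V.head hV) = ρ (α * β) := by
  have hs : ρ (U.getLast hU) = k := hUk _ (List.getLast_mem hU)
  have step1 : ∀ c : S, ρ (α * c) = ρ (U.getLast hU * c) := by
    intro c
    rcases eq_or_ne U.dropLast [] with hd | hd
    · have hU1 : U = [U.getLast hU] := by
        conv_lhs => rw [← List.dropLast_append_getLast hU]
        rw [hd, List.nil_append]
      have : α = U.getLast hU := by
        conv_lhs => rw [← hUp, hU1]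
        rfl
      rw [← this]
    · have hU2 : U = U.dropLast ++ [U.getLast hU] := (List.dropLast_append_getLast hU).symm
      have hα2 : α = prS α U.dropLast * U.getLast hU := by
        conv_lhs => rw [← hUp, hU2, prS_append α hd (by simp)]
        rfl
      have hrk : ρ (prS α U.dropLast * U.getLast hU) = ρ (U.getLast hU) := by
        rw [← hα2, hα, hs]
      conv_lhs => rw [hα2]
      exact rank_mul_right_congr hρ hrk c
  have step2 : ρ (α * β) = ρ (α * V.head hV) := by
    obtain ⟨b, V', rfl⟩ := List.exists_cons_of_ne_nil hV
    cases V' with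
    | nil =>
      have : β = (b :: ([] : List S)).head (by simp) := by rw [← hVp]; rfl
      rw [← this]
    | cons c m =>
      have hβ2 : β = b * prS α (c :: m) := by
        conv_lhs => rw [← hVp, prS_cons α b (by simp)]
      have hrk : ρ (b * prS α (c :: m)) = ρ b := by
        rw [← hβ2, hβ, hVk b (by simp)]
      have h3 := rank_mul_left_congr hρ (p := prS α (c :: m)) (s := b) hrk α
      rw [hβ2]
      simpa using h3
  rw [step2, step1 (V.head hV)]

theorem ranks_of_prod (hρ : IsRankLabelling ρ) {k : ℕ} (hk : ∀ s : S, ρ s ≤ k)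
    {d γ : S} (hγ : ρ γ = k) {l : List S} (hpr : prS d l = γ) :
    ∀ x ∈ l, ρ x = k := by
  intro x hx
  refine le_antisymm (hk x) ?_
  calc k = ρ (prS d l) := by rw [hpr, hγ]
    _ ≤ ρ x := rank_le_of_mem hρ (prod_mem_Jset d hx)

theorem boundary_rank' (hρ : IsRankLabelling ρ) {k : ℕ} (hk : ∀ s : S, ρ s ≤ k)
    {α β : S} (hα : ρ α = k) (hβ : ρ β = k) {i : ℕ}
    {u v : List {s : S // i ≤ ρ s}} (hu : u ≠ []) (hv : v ≠ [])
    (hup : prS α (u.map Subtype.val) = α) (hvp : prS α (v.map Subtype.val) = β) :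
    ρ ((u.getLast hu).val * (v.head hv).val) = ρ (α * β) := by
  have hU : u.map Subtype.val ≠ [] := by
    cases u with
    | nil => exact absurd rfl hu
    | cons a l => simp
  have hV : v.map Subtype.val ≠ [] := by
    cases v with
    | nil => exact absurd rfl hv
    | cons a l => simp
  have h := boundary_rank hρ hα hβ hU hV
    (ranks_of_prod hρ hk hα hup) (ranks_of_prod hρ hk hβ hvp) hup hvp
  rwa [List.getLast_map, List.head_map] at h

end Boundary

section MainAux

variable {S : Type*} [Semigroup S] [Finite S]

/-- The invariant: the word splits as a product of a word evaluating to `α` and a word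
evaluating to `β`. -/
def P0 (ρ : S → ℕ) (r : ℕ) (α β : S) (l : List {s : S // r + 1 ≤ ρ s}) : Prop :=
  ∃ u v : List {s : S // r + 1 ≤ ρ s}, u ≠ [] ∧ v ≠ [] ∧ l = u ++ v ∧
    prS α (u.map Subtype.val) = α ∧ prS α (v.map Subtype.val) = β

variable {ρ : S → ℕ} {k r : ℕ} {α β : S}

theorem prS_map_merge {i : ℕ} (α : S) (p q : List {s : S // i ≤ ρ s})
    {x y z : {s : S // i ≤ ρ s}} (hz : z.val = x.val * y.val) :
    prS α ((p ++ z :: q).map Subtype.val) = prS α ((p ++ x :: y :: q).map Subtype.val) := by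
  simp only [List.map_append, List.map_cons, hz]
  exact (prS_merge α _ _ _ _).symm

theorem prS_map_merge_nil {i : ℕ} (α : S) (q : List {s : S // i ≤ ρ s})
    {x y z : {s : S // i ≤ ρ s}} (hz : z.val = x.val * y.val) :
    prS α ((z :: q).map Subtype.val) = prS α ((x :: y :: q).map Subtype.val) := by
  simpa using prS_map_merge α [] q hz

theorem P0_merge (hρ : IsRankLabelling ρ) (hk : ∀ s : S, ρ s ≤ k)
    (hα : ρ α = k) (hβ : ρ β = k) (hαβ : ρ (α * β) = r)
    {s t : S} (hs : r + 1 ≤ ρ s) (ht : r + 1 ≤ ρ t) (hst : r + 1 ≤ ρ (s * t))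
    (p q : List {s : S // r + 1 ≤ ρ s}) :
    P0 ρ r α β (p ++ ⟨s, hs⟩ :: ⟨t, ht⟩ :: q) ↔ P0 ρ r α β (p ++ ⟨s * t, hst⟩ :: q) := by
  constructor
  · rintro ⟨u, v, hu, hv, heq, hup, hvp⟩
    rcases List.append_eq_append_iff.mp heq with ⟨a', hu2, h2⟩ | ⟨c, hp2, hv2⟩
    · match a', h2 with
      | [], h2 =>
        rw [List.append_nil] at hu2
        rw [List.nil_append] at h2
        refine ⟨u, ⟨s * t, hst⟩ :: q, hu, by simp, by rw [hu2], hup, ?_⟩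
        rw [← h2] at hvp
        exact (prS_map_merge_nil α q (x := ⟨s, hs⟩) (y := ⟨t, ht⟩) rfl).trans hvp
      | [a0], h2 =>
        exfalso
        obtain ⟨rfl, hv3⟩ : a0 = ⟨s, hs⟩ ∧ v = ⟨t, ht⟩ :: q := by
          have := h2
          simp only [List.cons_append, List.nil_append, List.cons.injEq] at this
          exact ⟨this.1.symm, this.2.symm⟩
        subst hv3
        subst hu2
        have hb := boundary_rank' hρ hk hα hβ hu (by simp) hup hvp
        rw [hαβ] at hb
        simp only [ne_eq, List.cons_ne_self, not_false_eq_true,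
          List.getLast_append_of_ne_nil, List.getLast_singleton, List.head_cons] at hb
        omega
      | a0 :: a1 :: a'', h2 =>
        obtain ⟨rfl, rfl, hq⟩ : a0 = ⟨s, hs⟩ ∧ a1 = ⟨t, ht⟩ ∧ q = a'' ++ v := by
          simp only [List.cons_append, List.cons.injEq] at h2
          exact ⟨h2.1.symm, h2.2.1.symm, h2.2.2⟩
        refine ⟨p ++ ⟨s * t, hst⟩ :: a'', v, by simp, hv, by rw [hq]; simp, ?_, hvp⟩
        rw [prS_map_merge α p a'' (x := ⟨s, hs⟩) (y := ⟨t, ht⟩) rfl, ← hu2]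
        exact hup
    · refine ⟨u, c ++ ⟨s * t, hst⟩ :: q, hu, by simp, by rw [hp2]; simp, hup, ?_⟩
      rw [prS_map_merge α c q (x := ⟨s, hs⟩) (y := ⟨t, ht⟩) rfl, ← hv2]
      exact hvp
  · rintro ⟨u, v, hu, hv, heq, hup, hvp⟩
    rcases List.append_eq_append_iff.mp heq with ⟨a', hu2, h2⟩ | ⟨c, hp2, hv2⟩
    · match a', h2 with
      | [], h2 =>
        rw [List.append_nil] at hu2
        rw [List.nil_append] at h2
        refine ⟨u, ⟨s, hs⟩ :: ⟨t, ht⟩ :: q, hu, by simp, by rw [hu2], hup, ?_⟩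
        rw [← h2] at hvp
        exact (prS_map_merge_nil α q (x := ⟨s, hs⟩) (y := ⟨t, ht⟩)
          (z := ⟨s * t, hst⟩) rfl).symm.trans hvp
      | a0 :: a'', h2 =>
        obtain ⟨rfl, hq⟩ : a0 = ⟨s * t, hst⟩ ∧ q = a'' ++ v := by
          simp only [List.cons_append, List.cons.injEq] at h2
          exact ⟨h2.1.symm, h2.2⟩
        refine ⟨p ++ ⟨s, hs⟩ :: ⟨t, ht⟩ :: a'', v, by simp, hv, by rw [hq]; simp, ?_, hvp⟩
        rw [← prS_map_merge α p a'' (x := ⟨s, hs⟩) (y := ⟨t, ht⟩) (z := ⟨s * t, hst⟩) rfl,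
          ← hu2]
        exact hup
    · refine ⟨u, c ++ ⟨s, hs⟩ :: ⟨t, ht⟩ :: q, hu, by simp, by rw [hp2]; simp, hup, ?_⟩
      rw [← prS_map_merge α c q (x := ⟨s, hs⟩) (y := ⟨t, ht⟩) (z := ⟨s * t, hst⟩) rfl, ← hv2]
      exact hvp

end MainAux

/-- The relations of the Cayley table presentation of `S` restricted to elements
of rank at least `i`. -/
def rankCayleyRel {S : Type*} [Semigroup S] (ρ : S → ℕ) (i : ℕ) :
    FreeSemigroup {s : S // i ≤ ρ s} → FreeSemigroup {s : S // i ≤ ρ s} → Prop := fun u v =>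
  ∃ (s t : S) (hs : i ≤ ρ s) (ht : i ≤ ρ t) (hst : i ≤ ρ (s * t)),
    u = FreeSemigroup.of ⟨s, hs⟩ * FreeSemigroup.of ⟨t, ht⟩ ∧
    v = FreeSemigroup.of ⟨s * t, hst⟩

section KeySection

/-- The list of letters of a word in the free semigroup. -/
def toL {γ : Type*} (u : FreeSemigroup γ) : List γ := u.1 :: u.2

theorem toL_mul {γ : Type*} (u v : FreeSemigroup γ) : toL (u * v) = toL u ++ toL v := rfl

theorem foldl_of_eq {γ : Type*} (a : γ) (l : List γ) :
    (l.map FreeSemigroup.of).foldl (· * ·) (FreeSemigroup.of a) = ⟨a, l⟩ := by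
  have h : ∀ (l : List γ) (u : FreeSemigroup γ),
      (l.map FreeSemigroup.of).foldl (· * ·) u = ⟨u.1, u.2 ++ l⟩ := by
    intro l
    induction l with
    | nil => intro u; simp
    | cons x m ih =>
      intro u
      rw [List.map_cons, List.foldl_cons, ih]
      show (⟨u.1, (u.2 ++ [x]) ++ m⟩ : FreeSemigroup γ) = ⟨u.1, u.2 ++ x :: m⟩
      simp
  rw [h]
  rfl

variable {S : Type*} [Semigroup S] [Finite S] {ρ : S → ℕ} {k r : ℕ} {α β : S}

theorem key_induction (hρ : IsRankLabelling ρ) (hk : ∀ s : S, ρ s ≤ k)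
    (hα : ρ α = k) (hβ : ρ β = k) (hαβ : ρ (α * β) = r)
    (u v : FreeSemigroup {s : S // r + 1 ≤ ρ s})
    (h : ConGen.Rel (rankCayleyRel ρ (r + 1)) u v) :
    ∀ p q : List {s : S // r + 1 ≤ ρ s},
      (P0 ρ r α β (p ++ toL u ++ q) ↔ P0 ρ r α β (p ++ toL v ++ q)) := by
  induction h with
  | of x y hxy =>
    obtain ⟨s, t, hs, ht, hst, rfl, rfl⟩ := hxy
    intro p q
    have e1 : toL (FreeSemigroup.of (⟨s, hs⟩ : {s : S // r + 1 ≤ ρ s})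
        * FreeSemigroup.of ⟨t, ht⟩) = [⟨s, hs⟩, ⟨t, ht⟩] := rfl
    have e2 : toL (FreeSemigroup.of (⟨s * t, hst⟩ : {s : S // r + 1 ≤ ρ s}))
        = [⟨s * t, hst⟩] := rfl
    rw [e1, e2]
    have e3 : p ++ [(⟨s, hs⟩ : {s : S // r + 1 ≤ ρ s}), ⟨t, ht⟩] ++ q
        = p ++ ⟨s, hs⟩ :: ⟨t, ht⟩ :: q := by simp
    have e4 : p ++ [(⟨s * t, hst⟩ : {s : S // r + 1 ≤ ρ s})] ++ q
        = p ++ ⟨s * t, hst⟩ :: q := by simp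
    rw [e3, e4]
    exact P0_merge hρ hk hα hβ hαβ hs ht hst p q
  | refl x => intro p q; exact Iff.rfl
  | symm h ih => intro p q; exact (ih p q).symm
  | trans h1 h2 ih1 ih2 => intro p q; exact (ih1 p q).trans (ih2 p q)
  | @mul a b c d h1 h2 ih1 ih2 =>
    intro p q
    rw [toL_mul, toL_mul]
    have e : ∀ X Y : List {s : S // r + 1 ≤ ρ s},
        p ++ (X ++ Y) ++ q = (p ++ X) ++ (Y ++ q) := by
      intro X Y; simp [List.append_assoc]
    rw [e (toL a) (toL c), e (toL b) (toL d)]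
    have h3 := ih2 (p ++ toL b) q
    rw [List.append_assoc (p ++ toL b) (toL c) q,
      List.append_assoc (p ++ toL b) (toL d) q] at h3
    exact (ih1 p (toL c ++ q)).trans h3

end KeySection

/-- Every word obtainable from `x_α · x_β` by the relations of rank `≥ r + 1` has the form
`x_{α₁} ⋯ x_{α_p} · x_{β₁} ⋯ x_{β_q}` with all letters of rank `k`, `α₁⋯α_p = α`,
`β₁⋯β_q = β` and `ρ (α_p β₁) = r`. -/
theorem stmt_2 {S : Type*} [Semigroup S] [Finite S]
    (ρ : S → ℕ) (hρ : IsRankLabelling ρ) (k : ℕ) (hk : ∀ s : S, ρ s ≤ k)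
    (α β : S) (r : ℕ) (hα : ρ α = k) (hβ : ρ β = k)
    (hαβ : ρ (α * β) = r) (hrk : r < k)
    (w : FreeSemigroup {s : S // r + 1 ≤ ρ s})
    (hw : conGen (rankCayleyRel ρ (r + 1))
      (FreeSemigroup.of ⟨α, by omega⟩ * FreeSemigroup.of ⟨β, by omega⟩) w) :
    ∃ (a : {s : S // r + 1 ≤ ρ s}) (as : List {s : S // r + 1 ≤ ρ s})
      (b : {s : S // r + 1 ≤ ρ s}) (bs : List {s : S // r + 1 ≤ ρ s}),
      (∀ x ∈ a :: as, ρ x.val = k) ∧ (∀ x ∈ b :: bs, ρ x.val = k) ∧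
      (as.map Subtype.val).foldl (· * ·) a.val = α ∧
      (bs.map Subtype.val).foldl (· * ·) b.val = β ∧
      ρ (((a :: as).getLast (List.cons_ne_nil _ _)).val * b.val) = r ∧
      w = ((as ++ b :: bs).map FreeSemigroup.of).foldl (· * ·) (FreeSemigroup.of a) := by
  have hw' : ConGen.Rel (rankCayleyRel ρ (r + 1))
      (FreeSemigroup.of ⟨α, by omega⟩ * FreeSemigroup.of ⟨β, by omega⟩) w := hw
  have hkey := key_induction hρ hk hα hβ hαβ _ _ hw' [] []
  have hP0 : P0 ρ r α β ([] ++ toL (FreeSemigroup.of (⟨α, by omega⟩ : {s : S // r + 1 ≤ ρ s})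
      * FreeSemigroup.of ⟨β, by omega⟩) ++ []) := by
    refine ⟨[⟨α, by omega⟩], [⟨β, by omega⟩], by simp, by simp, ?_, rfl, rfl⟩
    show toL _ ++ [] = _
    rfl
  have hP := hkey.mp hP0
  simp only [List.nil_append, List.append_nil] at hP
  obtain ⟨u, v, hu, hv, heq, hup, hvp⟩ := hP
  obtain ⟨a, as, rfl⟩ := List.exists_cons_of_ne_nil hu
  obtain ⟨b, bs, rfl⟩ := List.exists_cons_of_ne_nil hv
  have hw1 : w.1 = a ∧ w.2 = as ++ b :: bs := by
    have := heq
    simp only [toL, List.cons_append, List.cons.injEq] at this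
    exact this
  refine ⟨a, as, b, bs, ?_, ?_, ?_, ?_, ?_, ?_⟩
  · exact fun x hx => ranks_of_prod hρ hk hα hup x.val (List.mem_map_of_mem hx)
  · exact fun x hx => ranks_of_prod hρ hk hβ hvp x.val (List.mem_map_of_mem hx)
  · exact hup
  · exact hvp
  · have hb := boundary_rank' hρ hk hα hβ (List.cons_ne_nil a as) (List.cons_ne_nil b bs) hup hvp
    rw [hαβ] at hb
    simpa using hb
  · rw [foldl_of_eq, ← hw1.1, ← hw1.2]
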